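/- Let A be a Frobenius algebra with Frobenius isomorphism φ : A ≅ A* of left A-modules. Then there exists an algebra automorphism σ of A such that φ is an isomorphism of (A,A)-bimodules from A to (A*)_σ, where (A*)_σ denotes A* with right action twisted by σ. -/
import Mathlib


/-- If `(A, φ)` is a Frobenius algebra (`φ : A ≅ A*` an isomorphism
of left `A`-modules, with `(a·f·b)(x) = f(b x a)` on the dual), then there is an
algebra automorphism `σ` of `A` such that `φ` is an isomorphism of
`(A,A)`-bimodules `A ≅ (A*)_σ`, i.e. `φ(x·a) = φ(x)·σ(a)` for all `x, a`. -/
theorem stmt_2 (F A : Type) [Field F] [Ring A] [Algebra F A] [FiniteDimensional F A]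
    (φ : A ≃ₗ[F] (A →ₗ[F] F))
    (hφ : ∀ a x y : A, φ (a * x) y = φ x (y * a)) :
    ∃ σ : A ≃ₐ[F] A, ∀ x a y : A, φ (x * a) y = φ x (σ a * y) := by
  classical
  have h1 : ∀ w z : A, φ w z = φ 1 (z * w) := by
    intro w z
    simpa using hφ w 1 z
  set Ψ : A →ₗ[F] (A →ₗ[F] F) := (φ.toLinearMap).flip with hΨ
  have hΨapp : ∀ b z : A, Ψ b z = φ 1 (b * z) := by
    intro b z
    show φ z b = φ 1 (b * z)
    rw [h1]
  have hinj : Function.Injective Ψ := by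
    intro b c h
    have hz : ∀ f : Module.Dual F A, f (b - c) = 0 := by
      intro f
      obtain ⟨z, rfl⟩ := φ.surjective f
      have h2 : Ψ b z = Ψ c z := by rw [h]
      have h3 : φ z b = φ z c := h2
      simp [map_sub, h3]
    have := (Module.forall_dual_apply_eq_zero_iff F (b - c)).mp hz
    exact sub_eq_zero.mp this
  have hsurj : Function.Surjective Ψ := by
    have hfr : Module.finrank F A = Module.finrank F (A →ₗ[F] F) :=
      (Subspace.dual_finrank_eq (K := F) (V := A)).symm
    exact (LinearMap.injective_iff_surjective_of_finrank_eq_finrank hfr).mp hinj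
  set Ψe : A ≃ₗ[F] (A →ₗ[F] F) := LinearEquiv.ofBijective Ψ ⟨hinj, hsurj⟩ with hΨe
  set σl : A ≃ₗ[F] A := φ.trans Ψe.symm with hσl
  have hΨσ : ∀ a : A, Ψ (σl a) = φ a := by
    intro a
    have : Ψe (Ψe.symm (φ a)) = φ a := Ψe.apply_symm_apply _
    exact this
  have key : ∀ a z : A, φ 1 (σl a * z) = φ 1 (z * a) := by
    intro a z
    have h2 : Ψ (σl a) z = φ a z := by rw [hΨσ]
    rw [hΨapp] at h2
    rw [h2, h1]
  have hone : σl 1 = 1 := by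
    apply hinj
    ext z
    rw [hΨσ, hΨapp, one_mul, h1, mul_one]
  have hmul : ∀ a b : A, σl (a * b) = σl a * σl b := by
    intro a b
    apply hinj
    ext z
    rw [hΨσ, hΨapp, h1, ← mul_assoc, ← key b (z * a), ← mul_assoc, ← key a (σl b * z),
      ← mul_assoc]
  refine ⟨AlgEquiv.ofLinearEquiv σl hone hmul, ?_⟩
  intro x a y
  have : (AlgEquiv.ofLinearEquiv σl hone hmul) a = σl a := rfl
  rw [this, h1, ← mul_assoc, ← key a (y * x), h1 x, mul_assoc]
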